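/- Fix n ≥ 1, m ≥ 1 and θ ∈ ℝ^{n×m}, and define g(θ, x) = softmax(θ x) for x ∈ ℝ^m. The differential of θ' ↦ g(θ', x) at θ is H ↦ J(θx) H x, where J denotes the Jacobian of softmax, and its adjoint applied to w ∈ ℝⁿ is the matrix (J(θx) w) xᵀ ∈ ℝ^{n×m}. Then span{(J(θx) w) xᵀ : x ∈ ℝ^m, w ∈ ℝⁿ} = {Z ∈ ℝ^{n×m} : 𝟙ᵀ Z = 0}, the space of n×m matrices all of whose column sums vanish. Consequently, a C¹ function h : ℝ^{n×m} → ℝ has its gradient orthogonal to this span at every θ if and only if ∇h(θ) lies in the m-dimensional space spanned by the gradients of the column-sum functions h_j(θ) = Σ_{i=1}^n θ_{i,j}, j = 1, …, m; i.e., the softmax classification layer with cross-entropy loss admits exactly the m independent conservation laws h_j. -/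

import Mathlib

/-- `softmax(z)ᵢ = exp(zᵢ) / ∑ⱼ exp(zⱼ)`. -/
noncomputable def softmaxFun {ι : Type*} [Fintype ι] (z : ι → ℝ) : ι → ℝ :=
  fun i => Real.exp (z i) / ∑ j, Real.exp (z j)

/-- Action `w ↦ J(z) w` of the softmax Jacobian `J(z) = diag(s) − s sᵀ`, `s = softmax(z)`. -/
noncomputable def softmaxJacAct (n : ℕ) (z w : Fin n → ℝ) : Fin n → ℝ :=
  fun i => softmaxFun z i * w i - softmaxFun z i * ∑ j, softmaxFun z j * w j

/-- The softmax classification layer `g(θ, x) = softmax(θ x)`, `θ ∈ ℝ^{n×m}`. -/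
noncomputable def clsLayer (n m : ℕ) (θ : EuclideanSpace ℝ (Fin n × Fin m))
    (x : Fin m → ℝ) : EuclideanSpace ℝ (Fin n) :=
  (EuclideanSpace.equiv (Fin n) ℝ).symm (softmaxFun fun i => ∑ j, θ (i, j) * x j)

/-- The generators `(J(θx) w) xᵀ` of the trace space of the classification layer at `θ`. -/
def clsTraceSet (n m : ℕ) (θ : EuclideanSpace ℝ (Fin n × Fin m)) :
    Set (EuclideanSpace ℝ (Fin n × Fin m)) :=
  {v | ∃ (x : Fin m → ℝ) (w : Fin n → ℝ),
    v = (EuclideanSpace.equiv (Fin n × Fin m) ℝ).symm fun p =>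
      softmaxJacAct n (fun i => ∑ j, θ (i, j) * x j) w p.1 * x p.2}

open scoped RealInnerProductSpace

section Aux

variable {n m : ℕ}

lemma expSum_pos [Nonempty (Fin n)] (z : Fin n → ℝ) : 0 < ∑ j, Real.exp (z j) :=
  Finset.sum_pos (fun j _ => Real.exp_pos _) Finset.univ_nonempty

lemma softmax_pos [Nonempty (Fin n)] (z : Fin n → ℝ) (i : Fin n) : 0 < softmaxFun z i :=
  div_pos (Real.exp_pos _) (expSum_pos z)

lemma softmax_sum_one [Nonempty (Fin n)] (z : Fin n → ℝ) : ∑ i, softmaxFun z i = 1 := by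
  simp only [softmaxFun, ← Finset.sum_div]
  exact div_self (ne_of_gt (expSum_pos z))

lemma jac_sum_zero [Nonempty (Fin n)] (z w : Fin n → ℝ) :
    ∑ i, softmaxJacAct n z w i = 0 := by
  simp only [softmaxJacAct, Finset.sum_sub_distrib, ← Finset.sum_mul, softmax_sum_one z,
    one_mul, sub_self]

/-- the linear map `θ ↦ θ x` -/
noncomputable def LxL (n m : ℕ) (x : Fin m → ℝ) :
    EuclideanSpace ℝ (Fin n × Fin m) →L[ℝ] EuclideanSpace ℝ (Fin n) :=
  LinearMap.toContinuousLinearMap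
    { toFun := fun θ => WithLp.toLp 2 fun i => ∑ j, θ (i, j) * x j
      map_add' := by
        intro a b; ext i
        simp [PiLp.add_apply, add_mul, Finset.sum_add_distrib]
      map_smul' := by
        intro c a; ext i
        simp [PiLp.smul_apply, Finset.mul_sum, mul_assoc] }

@[simp] lemma LxL_apply (x : Fin m → ℝ) (θ : EuclideanSpace ℝ (Fin n × Fin m)) (i : Fin n) :
    LxL n m x θ i = ∑ j, θ (i, j) * x j := rfl

/-- the linear map `w ↦ J(z) w` -/
noncomputable def JacL (n : ℕ) (z : Fin n → ℝ) :
    EuclideanSpace ℝ (Fin n) →L[ℝ] EuclideanSpace ℝ (Fin n) :=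
  LinearMap.toContinuousLinearMap
    { toFun := fun w => WithLp.toLp 2 (softmaxJacAct n z w)
      map_add' := by
        intro a b; ext i
        simp only [softmaxJacAct, PiLp.add_apply, mul_add, Finset.sum_add_distrib]
        ring
      map_smul' := by
        intro c a; ext i
        simp only [softmaxJacAct, PiLp.smul_apply, smul_eq_mul, RingHom.id_apply, mul_sub,
          Finset.mul_sum]
        congr 1
        · ring
        · exact Finset.sum_congr rfl fun j _ => by ring }

@[simp] lemma JacL_apply (z : Fin n → ℝ) (w : EuclideanSpace ℝ (Fin n)) (i : Fin n) :
    JacL n z w i = softmaxJacAct n z w i := rfl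

set_option maxHeartbeats 1000000 in
lemma hasFDeriv_cls [Nonempty (Fin n)] (θ : EuclideanSpace ℝ (Fin n × Fin m))
    (x : Fin m → ℝ) :
    HasFDerivAt (fun θ' => clsLayer n m θ' x)
      ((JacL n (fun i => ∑ j, θ (i, j) * x j)).comp (LxL n m x)) θ := by
  set z : Fin n → ℝ := fun i => ∑ j, θ (i, j) * x j with hz
  set ℓ : Fin n → (EuclideanSpace ℝ (Fin n × Fin m) →L[ℝ] ℝ) :=
    fun i => (EuclideanSpace.proj i).comp (LxL n m x) with hℓdef
  have hℓθ : ∀ k, ℓ k θ = z k := fun k => rfl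
  have hSpos : 0 < ∑ k, Real.exp (z k) := expSum_pos z
  have hSne : (∑ k, Real.exp (z k)) ≠ 0 := ne_of_gt hSpos
  set eCLM : EuclideanSpace ℝ (Fin n) →L[ℝ] (Fin n → ℝ) :=
    ((EuclideanSpace.equiv (Fin n) ℝ : EuclideanSpace ℝ (Fin n) ≃L[ℝ] (Fin n → ℝ)) :
      EuclideanSpace ℝ (Fin n) →L[ℝ] (Fin n → ℝ)) with heC
  set Φ' := eCLM.comp ((JacL n z).comp (LxL n m x)) with hΦ'
  have key : ∀ i, HasFDerivAt
      (fun θ' : EuclideanSpace ℝ (Fin n × Fin m) =>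
        Real.exp (ℓ i θ') / ∑ k, Real.exp (ℓ k θ'))
      ((ContinuousLinearMap.proj i).comp Φ') θ := by
    intro i
    have hℓd : ∀ k, HasFDerivAt (fun θ' => ℓ k θ') (ℓ k) θ := fun k => (ℓ k).hasFDerivAt
    have hnum := (hℓd i).exp
    have hden : HasFDerivAt (fun θ' => ∑ k, Real.exp (ℓ k θ'))
        (∑ k, Real.exp (ℓ k θ) • ℓ k) θ := HasFDerivAt.fun_sum fun k _ => (hℓd k).exp
    have hSne' : (∑ k, Real.exp (ℓ k θ)) ≠ 0 := by simpa [hℓθ] using hSne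
    have hinv := (hasDerivAt_inv hSne').comp_hasFDerivAt θ hden
    have hmul := hnum.mul hinv
    have hfun : (fun θ' : EuclideanSpace ℝ (Fin n × Fin m) =>
        Real.exp (ℓ i θ') / ∑ k, Real.exp (ℓ k θ')) =
        fun θ' => Real.exp (ℓ i θ') * (∑ k, Real.exp (ℓ k θ'))⁻¹ := by
      funext θ'; rw [div_eq_mul_inv]
    rw [hfun]
    have heq : (ContinuousLinearMap.proj i).comp Φ' =
        Real.exp (ℓ i θ) • (-((∑ k, Real.exp (ℓ k θ)) ^ 2)⁻¹ • ∑ k, Real.exp (ℓ k θ) • ℓ k) +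
          (∑ k, Real.exp (ℓ k θ))⁻¹ • (Real.exp (ℓ i θ) • ℓ i) := by
      ext H
      simp only [ContinuousLinearMap.comp_apply, ContinuousLinearMap.proj_apply,
        ContinuousLinearMap.add_apply, ContinuousLinearMap.smul_apply,
        ContinuousLinearMap.sum_apply, ContinuousLinearMap.neg_apply, smul_eq_mul, hΦ', heC]
      have h0 : (eCLM ((JacL n z) ((LxL n m x) H))) i = softmaxJacAct n z (LxL n m x H) i := rfl
      have hLx : ∀ k, ℓ k H = (LxL n m x H) k := fun k => rfl
      rw [h0]
      simp only [softmaxJacAct, softmaxFun, hℓθ, hLx]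
      rw [show (∑ j, Real.exp (z j) / (∑ k, Real.exp (z k)) * (LxL n m x H) j)
            = (∑ j, Real.exp (z j) * (LxL n m x H) j) / (∑ k, Real.exp (z k)) by
          rw [Finset.sum_div]; exact Finset.sum_congr rfl fun j _ => by ring]
      generalize (∑ j, Real.exp (z j) * (LxL n m x H) j) = T
      generalize (LxL n m x H) i = ui
      revert hSne
      generalize (∑ k, Real.exp (z k)) = S
      intro hSne
      field_simp
      ring
    rw [heq]
    exact hmul
  have hΦ : HasFDerivAt (fun θ' : EuclideanSpace ℝ (Fin n × Fin m) =>
      (fun i => Real.exp (ℓ i θ') / ∑ k, Real.exp (ℓ k θ')) : _ → (Fin n → ℝ)) Φ' θ :=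
    hasFDerivAt_pi'' key
  have hiso := ((EuclideanSpace.equiv (Fin n) ℝ).symm.comp_hasFDerivAt_iff
    (x := θ) (f' := Φ')).2 hΦ
  have hfin : (((EuclideanSpace.equiv (Fin n) ℝ).symm :
      (Fin n → ℝ) →L[ℝ] EuclideanSpace ℝ (Fin n)).comp Φ') =
      (JacL n z).comp (LxL n m x) := by
    ext H i
    rfl
  rw [hfin] at hiso
  exact hiso

lemma adjoint_cls [Nonempty (Fin n)] (z : Fin n → ℝ) (x : Fin m → ℝ) (w : Fin n → ℝ) :
    ((JacL n z).comp (LxL n m x)).adjoint ((EuclideanSpace.equiv (Fin n) ℝ).symm w) =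
      (EuclideanSpace.equiv (Fin n × Fin m) ℝ).symm fun p =>
        softmaxJacAct n z w p.1 * x p.2 := by
  set A := (JacL n z).comp (LxL n m x) with hA
  set w' : EuclideanSpace ℝ (Fin n) := (EuclideanSpace.equiv (Fin n) ℝ).symm w with hw'
  ext p
  obtain ⟨p1, p2⟩ := p
  have h1 : (A.adjoint w') (p1, p2)
      = ⟪A.adjoint w', EuclideanSpace.single (p1, p2) (1:ℝ)⟫ := by
    rw [EuclideanSpace.inner_single_right]; simp
  rw [h1, ContinuousLinearMap.adjoint_inner_left]
  have hu : ∀ k, (LxL n m x (EuclideanSpace.single (p1, p2) (1:ℝ))) k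
      = if k = p1 then x p2 else 0 := by
    intro k
    by_cases hk : k = p1
    · subst hk
      simp [EuclideanSpace.single_apply, Prod.ext_iff, ite_mul, Finset.sum_ite_eq']
    · simp [EuclideanSpace.single_apply, Prod.ext_iff, hk]
  have h2 : ∀ i, (A (EuclideanSpace.single (p1, p2) (1:ℝ))) i
      = softmaxFun z i * (if i = p1 then x p2 else 0)
        - softmaxFun z i * (softmaxFun z p1 * x p2) := by
    intro i
    have : (A (EuclideanSpace.single (p1, p2) (1:ℝ))) i
        = softmaxJacAct n z (LxL n m x (EuclideanSpace.single (p1, p2) (1:ℝ))) i := rfl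
    rw [this]
    simp only [softmaxJacAct, hu]
    congr 1
    rw [show (∑ j, softmaxFun z j * if j = p1 then x p2 else 0)
          = softmaxFun z p1 * x p2 by
        simp [mul_ite, Finset.sum_ite_eq']]
  rw [PiLp.inner_apply]
  simp only [RCLike.inner_apply, starRingEnd_apply, star_trivial, h2]
  have hw'app : ∀ i, w' i = w i := fun i => rfl
  simp only [hw'app, mul_sub, Finset.sum_sub_distrib, mul_ite, mul_zero,
    Finset.sum_ite_eq']
  have hrhs : ((EuclideanSpace.equiv (Fin n × Fin m) ℝ).symm fun p =>
      softmaxJacAct n z w p.1 * x p.2) (p1, p2) = softmaxJacAct n z w p1 * x p2 := rfl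
  rw [hrhs]
  simp only [softmaxJacAct, Finset.mem_univ, if_pos]
  simp only [sub_mul, Finset.sum_sub_distrib, ite_mul, zero_mul, Finset.sum_ite_eq',
    Finset.mem_univ, if_pos]
  rw [show (∑ i, softmaxFun z i * (softmaxFun z p1 * x p2) * w i)
        = (∑ i, softmaxFun z i * w i) * (softmaxFun z p1 * x p2) by
      rw [Finset.sum_mul]; exact Finset.sum_congr rfl fun i _ => by ring]
  ring

/-- column sums of trace-set generators vanish -/
lemma traceSet_colsum [Nonempty (Fin n)] (θ : EuclideanSpace ℝ (Fin n × Fin m))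
    (v : EuclideanSpace ℝ (Fin n × Fin m)) (hv : v ∈ clsTraceSet n m θ) (j : Fin m) :
    ∑ i, v (i, j) = 0 := by
  obtain ⟨x, w, rfl⟩ := hv
  have : ∀ i : Fin n, ((EuclideanSpace.equiv (Fin n × Fin m) ℝ).symm fun p =>
      softmaxJacAct n (fun i => ∑ j, θ (i, j) * x j) w p.1 * x p.2) (i, j)
      = softmaxJacAct n (fun i => ∑ j, θ (i, j) * x j) w i * x j := fun i => rfl
  simp only [this, ← Finset.sum_mul, jac_sum_zero, zero_mul]

lemma span_traceSet_iff [Nonempty (Fin n)] (θ : EuclideanSpace ℝ (Fin n × Fin m))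
    (Z : EuclideanSpace ℝ (Fin n × Fin m)) :
    Z ∈ Submodule.span ℝ (clsTraceSet n m θ) ↔ ∀ j : Fin m, ∑ i, Z (i, j) = 0 := by
  constructor
  · intro hZ
    induction hZ using Submodule.span_induction with
    | mem v hv => exact traceSet_colsum θ v hv
    | zero => intro j; simp
    | add a b _ _ ha hb =>
      intro j
      simp only [PiLp.add_apply, Finset.sum_add_distrib, ha j, hb j, add_zero]
    | smul c a _ ha =>
      intro j
      simp only [PiLp.smul_apply, smul_eq_mul, ← Finset.mul_sum, ha j, mul_zero]
  · intro hZ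
    have hinst : Nonempty (Fin n) := inferInstance
    -- build Z as a sum of generators
    set xj : Fin m → Fin m → ℝ := fun j => fun j' => if j' = j then 1 else 0 with hxj
    set zj : Fin m → Fin n → ℝ := fun j => fun i => ∑ j', θ (i, j') * xj j j' with hzj
    set wj : Fin m → Fin n → ℝ := fun j => fun i => Z (i, j) / softmaxFun (zj j) i with hwj
    set v : Fin m → EuclideanSpace ℝ (Fin n × Fin m) := fun j =>
      (EuclideanSpace.equiv (Fin n × Fin m) ℝ).symm fun p =>
        softmaxJacAct n (fun i => ∑ j', θ (i, j') * xj j j') (wj j) p.1 * xj j p.2 with hv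
    have hmem : ∀ j, v j ∈ clsTraceSet n m θ := fun j => ⟨xj j, wj j, rfl⟩
    have hjac : ∀ j i, softmaxJacAct n (zj j) (wj j) i = Z (i, j) := by
      intro j i
      have hs : ∀ i, softmaxFun (zj j) i ≠ 0 := fun i => ne_of_gt (softmax_pos _ i)
      have h1 : ∀ k, softmaxFun (zj j) k * wj j k = Z (k, j) := by
        intro k
        rw [hwj]
        field_simp
        exact mul_div_cancel_left₀ _ (hs k)
      simp only [softmaxJacAct, h1, hZ j, mul_zero, sub_zero]
    have hsum : Z = ∑ j, v j := by
      ext p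
      obtain ⟨p1, p2⟩ := p
      rw [show (∑ j, v j) (p1, p2) = ∑ j, v j (p1, p2) from
        map_sum (EuclideanSpace.proj (𝕜 := ℝ) ((p1, p2) : Fin n × Fin m)) v Finset.univ]
      have : ∀ j, v j (p1, p2) = Z (p1, j) * if p2 = j then 1 else 0 := by
        intro j
        have h0 : v j (p1, p2)
            = softmaxJacAct n (zj j) (wj j) p1 * xj j p2 := rfl
        rw [h0, hjac]
      simp only [this, mul_ite, mul_one, mul_zero, Finset.sum_ite_eq]
      simp
    rw [hsum]
    exact Submodule.sum_mem _ fun j _ => Submodule.subset_span (hmem j)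

/-- gradient direction vectors of the column sums -/
noncomputable def cvec (n m : ℕ) (j : Fin m) : EuclideanSpace ℝ (Fin n × Fin m) :=
  (EuclideanSpace.equiv (Fin n × Fin m) ℝ).symm fun p => if p.2 = j then 1 else 0

lemma inner_cvec (j : Fin m) (Z : EuclideanSpace ℝ (Fin n × Fin m)) :
    ⟪cvec n m j, Z⟫ = ∑ i, Z (i, j) := by
  rw [PiLp.inner_apply]
  have : ∀ p : Fin n × Fin m, cvec n m j p = if p.2 = j then 1 else 0 := fun p => rfl
  simp only [RCLike.inner_apply, starRingEnd_apply, star_trivial, this]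
  rw [Fintype.sum_prod_type]
  simp [Finset.sum_ite_eq']

lemma grad_colsum (j : Fin m) (θ' : EuclideanSpace ℝ (Fin n × Fin m)) :
    gradient (fun θ'' : EuclideanSpace ℝ (Fin n × Fin m) => ∑ i, θ'' (i, j)) θ' =
      cvec n m j := by
  have hf : (fun θ'' : EuclideanSpace ℝ (Fin n × Fin m) => ∑ i, θ'' (i, j)) =
      fun θ'' => ⟪cvec n m j, θ''⟫ := by
    funext θ''; rw [inner_cvec]
  rw [gradient, hf]
  have h2 : (fun θ'' : EuclideanSpace ℝ (Fin n × Fin m) => ⟪cvec n m j, θ''⟫) =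
      ⇑(innerSL ℝ (cvec n m j)) := rfl
  rw [h2, ContinuousLinearMap.fderiv]
  have h3 : (InnerProductSpace.toDual ℝ (EuclideanSpace ℝ (Fin n × Fin m))) (cvec n m j) =
      innerSL ℝ (cvec n m j) := by
    ext y; rw [InnerProductSpace.toDual_apply_apply]; rfl
  rw [← h3, LinearIsometryEquiv.symm_apply_apply]

lemma ortho_iff [Nonempty (Fin n)] (hm : m ≠ 0) (hn : n ≠ 0)
    (g : EuclideanSpace ℝ (Fin n × Fin m)) :
    (∀ Z : EuclideanSpace ℝ (Fin n × Fin m), (∀ j, ∑ i, Z (i, j) = 0) → ⟪g, Z⟫ = 0) ↔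
      g ∈ Submodule.span ℝ (Set.range (cvec n m)) := by
  constructor
  · intro hg
    set a : Fin m → ℝ := fun j => (∑ i, g (i, j)) / n with ha
    set g' : EuclideanSpace ℝ (Fin n × Fin m) := ∑ j, a j • cvec n m j with hg'
    have hg'app : ∀ p : Fin n × Fin m, g' p = a p.2 := by
      intro p
      rw [hg', show (∑ j, a j • cvec n m j) p = ∑ j, (a j • cvec n m j) p from
        map_sum (EuclideanSpace.proj (𝕜 := ℝ) p) (fun j => a j • cvec n m j) Finset.univ]
      have : ∀ j, (a j • cvec n m j) p = a j * if p.2 = j then 1 else 0 := fun j => rfl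
      simp [this, mul_ite, Finset.sum_ite_eq']
    have hZcol : ∀ j, ∑ i, (g - g') (i, j) = 0 := by
      intro j
      simp only [PiLp.sub_apply, Finset.sum_sub_distrib, hg'app]
      simp only [Finset.sum_const, Finset.card_fin, nsmul_eq_mul, ha]
      field_simp
      ring
    have h1 : ⟪g, g - g'⟫ = 0 := hg _ hZcol
    have h2 : ⟪g', g - g'⟫ = 0 := by
      rw [hg', sum_inner]
      refine Finset.sum_eq_zero fun j _ => ?_
      rw [real_inner_smul_left, inner_cvec, hZcol j, mul_zero]
    have h3 : ⟪g - g', g - g'⟫ = 0 := by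
      rw [inner_sub_left, h1, h2, sub_zero]
    have h4 : g - g' = 0 := by rwa [inner_self_eq_zero] at h3
    have h5 : g = g' := by rwa [sub_eq_zero] at h4
    rw [h5, hg']
    exact Submodule.sum_mem _ fun j _ =>
      Submodule.smul_mem _ _ (Submodule.subset_span ⟨j, rfl⟩)
  · intro hg
    induction hg using Submodule.span_induction with
    | mem v hv =>
      obtain ⟨j, rfl⟩ := hv
      intro Z hZ
      rw [inner_cvec, hZ j]
    | zero => intro Z hZ; simp
    | add a b _ _ ha hb => intro Z hZ; rw [inner_add_left, ha Z hZ, hb Z hZ, add_zero]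
    | smul c a _ ha => intro Z hZ; rw [real_inner_smul_left, ha Z hZ, mul_zero]

end Aux

/-- For the softmax classification layer `g(θ, x) = softmax(θx)`:
(1) the differential of `θ' ↦ g(θ', x)` at `θ` is `H ↦ J(θx) (H x)`;
(2) its adjoint applied to `w` is (the vectorization of) `(J(θx) w) xᵀ`;
(3) the span of these adjoint images is exactly the space of matrices whose columns all
sum to zero;
(4) consequently, a `C¹` function `h` has its gradient orthogonal to this span at every
`θ` iff `∇h(θ)` always lies in the span of the gradients of the `m` column-sum functions
`h_j(θ) = ∑ᵢ θ_{i,j}`: these are exactly the conservation laws of the layer. -/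
theorem classification_layer_conservation
    (n m : ℕ) (hn : 1 ≤ n) (hm : 1 ≤ m) (θ : EuclideanSpace ℝ (Fin n × Fin m)) :
    (∀ x : Fin m → ℝ,
      DifferentiableAt ℝ (fun θ' => clsLayer n m θ' x) θ ∧
      (∀ H : EuclideanSpace ℝ (Fin n × Fin m),
        fderiv ℝ (fun θ' => clsLayer n m θ' x) θ H =
          (EuclideanSpace.equiv (Fin n) ℝ).symm
            (softmaxJacAct n (fun i => ∑ j, θ (i, j) * x j)
              (fun i => ∑ j, H (i, j) * x j))) ∧
      (∀ w : Fin n → ℝ,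
        (fderiv ℝ (fun θ' => clsLayer n m θ' x) θ).adjoint
            ((EuclideanSpace.equiv (Fin n) ℝ).symm w) =
          (EuclideanSpace.equiv (Fin n × Fin m) ℝ).symm fun p =>
            softmaxJacAct n (fun i => ∑ j, θ (i, j) * x j) w p.1 * x p.2)) ∧
    (∀ Z : EuclideanSpace ℝ (Fin n × Fin m),
      Z ∈ Submodule.span ℝ (clsTraceSet n m θ) ↔ ∀ j : Fin m, ∑ i, Z (i, j) = 0) ∧
    (∀ h : EuclideanSpace ℝ (Fin n × Fin m) → ℝ, ContDiff ℝ 1 h →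
      ((∀ θ' : EuclideanSpace ℝ (Fin n × Fin m),
          ∀ v ∈ Submodule.span ℝ (clsTraceSet n m θ'), inner ℝ (gradient h θ') v = (0:ℝ)) ↔
       (∀ θ' : EuclideanSpace ℝ (Fin n × Fin m),
          gradient h θ' ∈ Submodule.span ℝ
            {v | ∃ j : Fin m, v = gradient (fun θ'' => ∑ i, θ'' (i, j)) θ'}))) := by
  have hne : Nonempty (Fin n) := ⟨⟨0, hn⟩⟩
  refine ⟨?_, ?_, ?_⟩
  · intro x
    have hD := hasFDeriv_cls θ x
    refine ⟨hD.differentiableAt, ?_, ?_⟩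
    · intro H
      rw [hD.fderiv]
      rfl
    · intro w
      rw [hD.fderiv]
      exact adjoint_cls _ x w
  · exact span_traceSet_iff θ
  · intro h _
    have hset : ∀ θ' : EuclideanSpace ℝ (Fin n × Fin m),
        {v | ∃ j : Fin m, v = gradient (fun θ'' => ∑ i, θ'' (i, j)) θ'} =
          Set.range (cvec n m) := by
      intro θ'
      ext v
      constructor
      · rintro ⟨j, rfl⟩; exact ⟨j, (grad_colsum j θ').symm ▸ rfl⟩
      · rintro ⟨j, rfl⟩; exact ⟨j, (grad_colsum j θ').symm⟩
    have hm0 : m ≠ 0 := by omega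
    have hn0 : n ≠ 0 := by omega
    constructor
    · intro hL θ'
      rw [hset θ']
      exact (ortho_iff hm0 hn0 _).1 fun Z hZ => hL θ' Z ((span_traceSet_iff θ' Z).2 hZ)
    · intro hR θ' v hv
      have hg := (hset θ') ▸ hR θ'
      exact (ortho_iff hm0 hn0 _).2 hg v ((span_traceSet_iff θ' v).1 hv)
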